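/- If two extreme sets X and Y cross and X ∪ Y is a Steiner cut, then X ∪ Y is extreme. -/
import Mathlib


variable {V : Type*}

def IsSteinerCut (T X : Set V) : Prop := (X ∩ T).Nonempty ∧ ¬ T ⊆ X

def SteinerExtreme (d : Set V → ℝ) (T X : Set V) : Prop :=
  IsSteinerCut T X ∧ ∀ Y, IsSteinerCut T Y → Y ⊂ X → d X < d Y

def Crosses (X Y : Set V) : Prop :=
  (X ∩ Y).Nonempty ∧ (X \ Y).Nonempty ∧ (Y \ X).Nonempty

/-- Step lemma: if `X ⊆ W ⊊ X ∪ Y`, `X ∩ Y` meets `T`, and `T ⊄ X ∪ Y`,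
then `d (X ∪ Y) < d W` using extremeness of `Y`. -/
lemma step_lemma (d : Set V → ℝ) (T X Y W : Set V)
    (hsub : ∀ A B : Set V, d (A ∩ B) + d (A ∪ B) ≤ d A + d B)
    (hYext : ∀ Z, IsSteinerCut T Z → Z ⊂ Y → d Y < d Z)
    (hint : ((X ∩ Y) ∩ T).Nonempty) (hnT : ¬ T ⊆ X ∪ Y)
    (hXW : X ⊆ W) (hW : W ⊂ X ∪ Y) : d (X ∪ Y) < d W := by
  have hWYsc : IsSteinerCut T (W ∩ Y) := by
    constructor
    · obtain ⟨t, ht⟩ := hint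
      exact ⟨t, ⟨⟨hXW ht.1.1, ht.1.2⟩, ht.2⟩⟩
    · intro h
      exact hnT (fun x hx => Or.inr (h hx).2)
  have hWYss : W ∩ Y ⊂ Y := by
    refine ⟨Set.inter_subset_right, fun h => ?_⟩
    have hYW : Y ⊆ W := fun x hx => (h hx).1
    exact hW.2 (Set.union_subset hXW hYW)
  have h1 : d Y < d (W ∩ Y) := hYext _ hWYsc hWYss
  have h2 : d (W ∩ Y) + d (W ∪ Y) ≤ d W + d Y := hsub W Y
  have hWY : W ∪ Y = X ∪ Y := by
    apply Set.Subset.antisymm (Set.union_subset hW.1 Set.subset_union_right)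
    exact Set.union_subset (hXW.trans Set.subset_union_left) Set.subset_union_right
  rw [hWY] at h2
  linarith

/-- Key lemma: any Steiner cut `Z ⊊ X ∪ Y` containing a terminal in `X`
satisfies `d (X ∪ Y) < d Z`. -/
lemma key_lemma (d : Set V → ℝ) (T X Y Z : Set V)
    (hsub : ∀ A B : Set V, d (A ∩ B) + d (A ∪ B) ≤ d A + d B)
    (hXext : ∀ W, IsSteinerCut T W → W ⊂ X → d X < d W)
    (hYext : ∀ W, IsSteinerCut T W → W ⊂ Y → d Y < d W)
    (hint : ((X ∩ Y) ∩ T).Nonempty) (hnT : ¬ T ⊆ X ∪ Y)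
    (hZ : Z ⊂ X ∪ Y) (ht : ∃ t, t ∈ Z ∩ X ∩ T) : d (X ∪ Y) < d Z := by
  obtain ⟨t, htZ, htT⟩ := ht
  by_cases hXZ : X ⊆ Z
  · exact step_lemma d T X Y Z hsub hYext hint hnT hXZ hZ
  · -- Z ∩ X is a proper Steiner subset of X
    have hZXsc : IsSteinerCut T (Z ∩ X) := by
      constructor
      · exact ⟨t, ⟨⟨htZ.1, htZ.2⟩, htT⟩⟩
      · intro h
        exact hnT (fun x hx => Or.inl (h hx).2)
    have hZXss : Z ∩ X ⊂ X := by
      refine ⟨Set.inter_subset_right, fun h => ?_⟩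
      exact hXZ (fun x hx => (h hx).1)
    have h1 : d X < d (Z ∩ X) := hXext _ hZXsc hZXss
    have h2 : d (Z ∩ X) + d (Z ∪ X) ≤ d Z + d X := hsub Z X
    have h3 : d (Z ∪ X) < d Z := by linarith
    by_cases hZXU : Z ∪ X = X ∪ Y
    · rw [hZXU] at h3; exact h3
    · have hW : Z ∪ X ⊂ X ∪ Y := by
        refine ⟨Set.union_subset hZ.1 Set.subset_union_left, fun h => ?_⟩
        exact hZXU (Set.Subset.antisymm (Set.union_subset hZ.1 Set.subset_union_left) h)
      have := step_lemma d T X Y (Z ∪ X) hsub hYext hint hnT Set.subset_union_right hW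
      linarith

/-- If two extreme sets `X` and `Y` cross and `X ∪ Y` is a Steiner cut,
then `X ∪ Y` is extreme. -/
theorem extreme_union [Fintype V] (d : Set V → ℝ) (T X Y : Set V)
    (hsub : ∀ A B : Set V, d (A ∩ B) + d (A ∪ B) ≤ d A + d B)
    (hpos : ∀ A B : Set V, d (A \ B) + d (B \ A) ≤ d A + d B)
    (h3 : ∀ A B : Set V, d A ≤ d (A ∩ B) → d (A ∪ B) ≤ d B)
    (h4 : ∀ A B : Set V, Crosses A B → max (d A) (d B) < d (A ∩ B) →
      d (A ∪ B) < min (d A) (d B))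
    (hX : SteinerExtreme d T X) (hY : SteinerExtreme d T Y) (hc : Crosses X Y)
    (hXY : IsSteinerCut T (X ∪ Y)) :
    SteinerExtreme d T (X ∪ Y) := by
  -- First: X ∩ Y must meet T
  have hint : ((X ∩ Y) ∩ T).Nonempty := by
    by_contra hempty
    have hdisj : ∀ x, x ∈ X → x ∈ Y → x ∉ T := by
      intro x hx hy hT
      exact hempty ⟨x, ⟨⟨hx, hy⟩, hT⟩⟩
    -- X \ Y is a Steiner cut
    have hXYsc : IsSteinerCut T (X \ Y) := by
      obtain ⟨s, hsX, hsT⟩ := hX.1.1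
      obtain ⟨u, huY, huT⟩ := hY.1.1
      constructor
      · exact ⟨s, ⟨⟨hsX, fun h => hdisj s hsX h hsT⟩, hsT⟩⟩
      · intro h
        exact hdisj u ((h huT).1) huY huT
    have hYXsc : IsSteinerCut T (Y \ X) := by
      obtain ⟨s, hsX, hsT⟩ := hX.1.1
      obtain ⟨u, huY, huT⟩ := hY.1.1
      constructor
      · exact ⟨u, ⟨⟨huY, fun h => hdisj u h huY huT⟩, huT⟩⟩
      · intro h
        exact hdisj s hsX ((h hsT).1) hsT
    obtain ⟨p, hpX, hpY⟩ := hc.1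
    have hss1 : X \ Y ⊂ X := ⟨Set.diff_subset, fun h => (h hpX).2 hpY⟩
    have hss2 : Y \ X ⊂ Y := ⟨Set.diff_subset, fun h => (h hpY).2 hpX⟩
    have h1 : d X < d (X \ Y) := hX.2 _ hXYsc hss1
    have h2 : d Y < d (Y \ X) := hY.2 _ hYXsc hss2
    have := hpos X Y
    linarith
  refine ⟨hXY, fun Z hZsc hZss => ?_⟩
  obtain ⟨t, htZ, htT⟩ := hZsc.1
  have htU : t ∈ X ∪ Y := hZss.1 htZ
  rcases htU with htX | htY
  · exact key_lemma d T X Y Z hsub hX.2 hY.2 hint hXY.2 hZss ⟨t, ⟨⟨htZ, htX⟩, htT⟩⟩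
  · have hint' : ((Y ∩ X) ∩ T).Nonempty := by rwa [Set.inter_comm Y X]
    have hnT' : ¬ T ⊆ Y ∪ X := by rw [Set.union_comm Y X]; exact hXY.2
    have hZss' : Z ⊂ Y ∪ X := by rwa [Set.union_comm Y X]
    have := key_lemma d T Y X Z hsub hY.2 hX.2 hint' hnT' hZss' ⟨t, ⟨⟨htZ, htY⟩, htT⟩⟩
    rwa [Set.union_comm Y X] at this
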